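/- There exist positive constants T and c such that the following holds for every finite field F with |F| = q. For every subset U ⊆ F³ with n := |U| ≥ Tq such that every line of F³ contains at most n/2 points of U, there exists j ∈ {2,3} and a family A ⊆ G_j(U) with |A| ≥ c·n^j such that every A ∈ A satisfies |U ∩ K°_A| ≥ |U ∩ K_A|/10 and |U ∩ K_A| ≥ c·n/q. (Claim 7.) -/

import Mathlib

open Finset

noncomputable section

/-- A finite point set is contained in a line (1-dimensional affine subspace) of `F³`. -/
def inLine (F : Type*) [Field F] (A : Finset (Fin 3 → F)) : Prop :=
  ∃ L : AffineSubspace F (Fin 3 → F), Module.finrank F L.direction = 1 ∧ ∀ x ∈ A, x ∈ L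

/- `G₃(U)`: the 3-element subsets of `U` not contained in any line. -/
open Classical in
def G3 (F : Type*) [Field F] (U : Finset (Fin 3 → F)) : Finset (Finset (Fin 3 → F)) :=
  (U.powersetCard 3).filter (fun A => ¬ inLine F A)

/- The number of points of `U` lying in the set `s`. -/
open Classical in
def nIn {α : Type*} (U : Finset α) (s : Set α) : ℕ :=
  (U.filter (fun x => x ∈ s)).card

/-- A finite point set is contained in a flat of dimension `k` in `F³`. -/
def inFlat (F : Type*) [Field F] (k : ℕ) (A : Finset (Fin 3 → F)) : Prop :=
  ∃ W : AffineSubspace F (Fin 3 → F), Module.finrank F W.direction = k ∧ ∀ x ∈ A, x ∈ W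

/- `G_j(U)`: the `j`-element subsets of `U` not contained in any `(j-2)`-flat. -/
open Classical in
def Gj (F : Type*) [Field F] (j : ℕ) (U : Finset (Fin 3 → F)) : Finset (Finset (Fin 3 → F)) :=
  (U.powersetCard j).filter (fun A => ¬ inFlat F (j - 2) A)

/-- `K°_A`: the affine span of `A` with the affine spans of all proper nonempty subsets of
`A` removed. -/
def Kcirc (F : Type*) [Field F] (A : Finset (Fin 3 → F)) : Set (Fin 3 → F) :=
  (affineSpan F (A : Set (Fin 3 → F)) : Set (Fin 3 → F)) \
    ⋃ (B : Finset (Fin 3 → F)) (_ : B ⊂ A ∧ B.Nonempty),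
      (affineSpan F (B : Set (Fin 3 → F)) : Set (Fin 3 → F))
set_option linter.unusedSectionVars false
section helpers
variable {F : Type} [Field F] [Fintype F]
open Classical

lemma triple_range (x y z : Fin 3 → F) :
    ({x, y, z} : Set (Fin 3 → F)) = Set.range ![x, y, z] := by
  ext w
  constructor
  · rintro (rfl | rfl | rfl)
    exacts [⟨0, rfl⟩, ⟨1, rfl⟩, ⟨2, rfl⟩]
  · rintro ⟨i, rfl⟩
    fin_cases i
    · exact Or.inl rfl
    · exact Or.inr (Or.inl rfl)
    · exact Or.inr (Or.inr rfl)

lemma line_dir {x y : Fin 3 → F} (h : x ≠ y) :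
    Module.finrank F (affineSpan F ({x, y} : Set (Fin 3 → F))).direction = 1 := by
  rw [direction_affineSpan, vectorSpan_pair]
  exact finrank_span_singleton (vsub_ne_zero.mpr h)

lemma plane_dir {x y z : Fin 3 → F} (hxy : x ≠ y)
    (hz : z ∉ affineSpan F ({x, y} : Set (Fin 3 → F))) :
    Module.finrank F (affineSpan F ({x, y, z} : Set (Fin 3 → F))).direction = 2 := by
  have hncol : ¬ Collinear F ({x, y, z} : Set (Fin 3 → F)) := by
    intro h
    exact hz (h.mem_affineSpan_of_mem_of_ne (by simp) (by simp) (by simp) hxy)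
  have hai : AffineIndependent F ![x, y, z] :=
    affineIndependent_iff_not_collinear_set.2 hncol
  have h2 := hai.finrank_vectorSpan (by simp : Fintype.card (Fin 3) = 2 + 1)
  rw [direction_affineSpan, triple_range x y z]
  exact h2

lemma affine_eq_of_le_finrank {S W : AffineSubspace F (Fin 3 → F)} {p : Fin 3 → F}
    (hp : p ∈ S) (hle : S ≤ W)
    (hr : Module.finrank F S.direction = Module.finrank F W.direction) : S = W := by
  have hd : S.direction = W.direction :=
    Submodule.eq_of_le_of_finrank_eq (AffineSubspace.direction_le hle) hr
  exact (AffineSubspace.eq_iff_direction_eq_of_mem hp (hle hp)).2 hd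

lemma flat_card (S : AffineSubspace F (Fin 3 → F)) {p : Fin 3 → F} (hp : p ∈ S) :
    (univ.filter (fun w => w ∈ S)).card = Fintype.card F ^ Module.finrank F S.direction := by
  have e : {w // w ∈ S} ≃ S.direction :=
    { toFun := fun w => ⟨w.1 -ᵥ p, AffineSubspace.vsub_mem_direction w.2 hp⟩
      invFun := fun v => ⟨v.1 +ᵥ p, AffineSubspace.vadd_mem_of_mem_direction v.2 hp⟩
      left_inv := fun w => by ext1; simp
      right_inv := fun v => by ext1; simp }
  rw [← Fintype.card_subtype, Fintype.card_congr e]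
  exact Module.card_eq_pow_finrank (K := F) (V := S.direction)

lemma nIn_le_card (U : Finset (Fin 3 → F)) (s : Set (Fin 3 → F)) : nIn U s ≤ U.card :=
  card_le_card (filter_subset _ _)

lemma nIn_diag_le (U : Finset (Fin 3 → F)) (a : Fin 3 → F) :
    nIn U (affineSpan F (({a, a} : Finset (Fin 3 → F)) : Set (Fin 3 → F)) :
      Set (Fin 3 → F)) ≤ 1 := by
  have h1 : ((({a, a} : Finset (Fin 3 → F))) : Set (Fin 3 → F)) = {a} := by simp
  calc nIn U _ ≤ ({a} : Finset (Fin 3 → F)).card := by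
        apply card_le_card
        intro w hw
        rw [mem_filter] at hw
        have := hw.2
        rw [h1, AffineSubspace.coe_affineSpan_singleton] at this
        simpa using this
    _ = 1 := card_singleton a
end helpers
set_option linter.unusedSectionVars false
section counting
variable {F : Type} [Field F] [Fintype F]
open Classical

lemma pair_subset_triple (x y z : Fin 3 → F) :
    ({x, y} : Set (Fin 3 → F)) ⊆ ({x, y, z} : Set (Fin 3 → F)) := by
  intro w hw
  rcases hw with rfl | rfl
  · exact Set.mem_insert _ _
  · exact Set.mem_insert_of_mem _ (Set.mem_insert _ _)

lemma plane_count {U : Finset (Fin 3 → F)} {x y : Fin 3 → F} (hxy : x ≠ y) {t' : ℝ}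
    (ht' : 0 ≤ t') :
    ((U.filter (fun z => z ∉ affineSpan F ({x, y} : Set (Fin 3 → F)) ∧
        (nIn U (affineSpan F ({x, y, z} : Set (Fin 3 → F)) : Set (Fin 3 → F)) : ℝ) < t')).card : ℝ)
      ≤ ((Fintype.card F : ℝ) + 1) * t' := by
  set q := Fintype.card F with hq
  have hq2 : 2 ≤ q := Fintype.one_lt_card
  set L := affineSpan F ({x, y} : Set (Fin 3 → F)) with hL
  set g : (Fin 3 → F) → AffineSubspace F (Fin 3 → F) :=
    fun z => affineSpan F ({x, y, z} : Set (Fin 3 → F)) with hg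
  set B := U.filter (fun z => z ∉ L ∧
      (nIn U ((g z : AffineSubspace F (Fin 3 → F)) : Set (Fin 3 → F)) : ℝ) < t') with hB
  set S := B.image g with hS
  -- basic properties of planes in S
  have hmemS : ∀ P ∈ S, L ≤ P ∧ Module.finrank F P.direction = 2 ∧
      (nIn U (P : Set (Fin 3 → F)) : ℝ) < t' := by
    intro P hP
    rcases mem_image.1 hP with ⟨z, hzB, rfl⟩
    rcases mem_filter.1 hzB with ⟨hzU, hzL, hzt⟩
    refine ⟨?_, plane_dir hxy hzL, hzt⟩
    exact affineSpan_mono F (pair_subset_triple x y z)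
  -- number of planes is at most q + 1
  have himg : (S.card : ℝ) ≤ (q : ℝ) + 1 := by
    set h : AffineSubspace F (Fin 3 → F) → Finset (Fin 3 → F) :=
      fun P => (univ.filter (fun w => w ∈ P)) \ (univ.filter (fun w => w ∈ L)) with hh
    have hxL : x ∈ L := subset_affineSpan F _ (Set.mem_insert _ _)
    have hLcard : (univ.filter (fun w => w ∈ L)).card = q ^ 1 := by
      rw [flat_card L hxL, line_dir hxy]
    have hcardh : ∀ P ∈ S, (h P).card = q ^ 2 - q := by
      intro P hP
      obtain ⟨hLP, hrk, -⟩ := hmemS P hP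
      have hsub : (univ.filter (fun w => w ∈ L)) ⊆ (univ.filter (fun w => w ∈ P)) := by
        intro w hw
        rw [mem_filter] at hw ⊢
        exact ⟨hw.1, hLP hw.2⟩
      rw [hh]
      rw [card_sdiff_of_subset hsub, hLcard, flat_card P (hLP hxL), hrk, pow_one]
    have hdisj : ∀ P₁ ∈ S, ∀ P₂ ∈ S, P₁ ≠ P₂ → Disjoint (h P₁) (h P₂) := by
      intro P₁ hP₁ P₂ hP₂ hne
      rw [Finset.disjoint_left]
      intro w hw₁ hw₂
      obtain ⟨hLP₁, hrk₁, -⟩ := hmemS P₁ hP₁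
      obtain ⟨hLP₂, hrk₂, -⟩ := hmemS P₂ hP₂
      rw [hh, mem_sdiff, mem_filter, mem_filter] at hw₁ hw₂
      have hwL : w ∉ L := by
        intro hwl
        exact hw₁.2 ⟨mem_univ _, hwl⟩
      have key : ∀ P : AffineSubspace F (Fin 3 → F), L ≤ P →
          Module.finrank F P.direction = 2 → w ∈ P →
          P = affineSpan F ({x, y, w} : Set (Fin 3 → F)) := by
        intro P hLP hrk hwP
        have hle : affineSpan F ({x, y, w} : Set (Fin 3 → F)) ≤ P := by
          apply affineSpan_le.2
          intro u hu
          rcases hu with rfl | rfl | rfl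
          · exact hLP hxL
          · exact hLP (subset_affineSpan F _ (Set.mem_insert_of_mem _ rfl))
          · exact hwP
        have hxsp : x ∈ affineSpan F ({x, y, w} : Set (Fin 3 → F)) :=
          subset_affineSpan F _ (Set.mem_insert _ _)
        exact (affine_eq_of_le_finrank hxsp hle (by rw [plane_dir hxy hwL, hrk])).symm
      exact hne ((key P₁ hLP₁ hrk₁ hw₁.1.2).trans (key P₂ hLP₂ hrk₂ hw₂.1.2).symm)
    have hbu : (S.biUnion h).card = S.card * (q ^ 2 - q) := by
      rw [card_biUnion hdisj]
      rw [Finset.sum_congr rfl hcardh, sum_const, smul_eq_mul]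
    have hbsub : S.biUnion h ⊆ univ \ (univ.filter (fun w => w ∈ L)) := by
      intro w hw
      rcases mem_biUnion.1 hw with ⟨P, hP, hwP⟩
      rw [hh, mem_sdiff] at hwP
      rw [mem_sdiff]
      exact ⟨mem_univ _, hwP.2⟩
    have hcard3 : (univ : Finset (Fin 3 → F)).card = q ^ 3 := by
      rw [card_univ]
      rw [Fintype.card_fun]
      simp [hq]
    have hineq : S.card * (q ^ 2 - q) ≤ q ^ 3 - q := by
      calc S.card * (q ^ 2 - q) = (S.biUnion h).card := hbu.symm
        _ ≤ (univ \ (univ.filter (fun w => w ∈ L))).card := card_le_card hbsub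
        _ = q ^ 3 - q := by
            rw [card_sdiff_of_subset (subset_univ _), hcard3, hLcard, pow_one]
    -- go to the reals
    have hqq : q ≤ q ^ 2 := by nlinarith
    have hqq3 : q ≤ q ^ 3 := by nlinarith
    have hR : (S.card : ℝ) * ((q : ℝ) ^ 2 - q) ≤ (q : ℝ) ^ 3 - q := by
      have := (Nat.cast_le (α := ℝ)).2 hineq
      push_cast [Nat.cast_sub hqq, Nat.cast_sub hqq3] at this
      convert this using 2 <;> push_cast <;> ring
    have hpos : (0 : ℝ) < (q : ℝ) ^ 2 - q := by
      have : (2 : ℝ) ≤ q := by exact_mod_cast hq2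
      nlinarith
    nlinarith [hR, hpos]
  -- fiberwise count
  have hfib := Finset.card_eq_sum_card_fiberwise
    (f := g) (s := B) (t := S) (fun z hz => mem_image_of_mem g hz)
  have hfible : ∀ P ∈ S, ((B.filter (fun z => g z = P)).card : ℝ) ≤ t' := by
    intro P hP
    obtain ⟨-, -, hPt⟩ := hmemS P hP
    have hsub : B.filter (fun z => g z = P) ⊆
        U.filter (fun w => w ∈ (P : Set (Fin 3 → F))) := by
      intro z hz
      rw [mem_filter] at hz
      have hzB := hz.1
      have hzg := hz.2
      rw [mem_filter]
      refine ⟨(mem_filter.1 hzB).1, ?_⟩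
      rw [← hzg]
      exact subset_affineSpan F _ (by simp : z ∈ ({x, y, z} : Set (Fin 3 → F)))
    calc ((B.filter (fun z => g z = P)).card : ℝ)
        ≤ ((U.filter (fun w => w ∈ (P : Set (Fin 3 → F)))).card : ℝ) := by
          exact_mod_cast card_le_card hsub
      _ = (nIn U (P : Set (Fin 3 → F)) : ℝ) := by rw [nIn]
      _ ≤ t' := le_of_lt hPt
  calc (B.card : ℝ) = ∑ P ∈ S, ((B.filter (fun z => g z = P)).card : ℝ) := by
        rw [hfib]; push_cast; ring
    _ ≤ ∑ P ∈ S, t' := Finset.sum_le_sum hfible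
    _ = S.card * t' := by rw [sum_const, nsmul_eq_mul]
    _ ≤ ((q : ℝ) + 1) * t' := by
        apply mul_le_mul_of_nonneg_right himg ht'
end counting
set_option linter.unusedSectionVars false
section kcirc
variable {F : Type} [Field F] [Fintype F]
open Classical

lemma kcirc_pair (U : Finset (Fin 3 → F)) {x y : Fin 3 → F} (hxy : x ≠ y) :
    (nIn U (affineSpan F ((({x, y} : Finset (Fin 3 → F))) : Set (Fin 3 → F)) :
        Set (Fin 3 → F)) : ℝ) ≤ (nIn U (Kcirc F {x, y}) : ℝ) + 2 := by
  set A : Finset (Fin 3 → F) := {x, y} with hA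
  have hsub : U.filter (fun w => w ∈ (affineSpan F ((A : Set (Fin 3 → F))) :
      Set (Fin 3 → F))) ⊆ U.filter (fun w => w ∈ Kcirc F A) ∪ A := by
    intro w hw
    rw [mem_filter] at hw
    by_cases hwA : w ∈ A
    · exact mem_union_right _ hwA
    · apply mem_union_left
      rw [mem_filter]
      refine ⟨hw.1, hw.2, ?_⟩
      intro hmem
      simp only [Set.mem_iUnion] at hmem
      obtain ⟨B, ⟨hBA, hBne⟩, hwB⟩ := hmem
      have hBcard : B.card < 2 := by
        have := Finset.card_lt_card hBA
        rwa [hA, card_pair hxy] at this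
      have hB1 : B.card = 1 := le_antisymm (by omega) (Finset.card_pos.2 hBne)
      obtain ⟨a, rfl⟩ := Finset.card_eq_one.1 hB1
      have haA : a ∈ A := hBA.1 (Finset.mem_singleton_self a)
      have : w = a := by
        have h1 : ((({a} : Finset (Fin 3 → F))) : Set (Fin 3 → F)) = {a} := by simp
        rw [h1, AffineSubspace.coe_affineSpan_singleton] at hwB
        simpa using hwB
      exact hwA (this ▸ haA)
  have hcard : nIn U (affineSpan F ((A : Set (Fin 3 → F))) : Set (Fin 3 → F)) ≤
      nIn U (Kcirc F A) + 2 := by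
    calc nIn U _ ≤ (U.filter (fun w => w ∈ Kcirc F A) ∪ A).card := card_le_card hsub
      _ ≤ (U.filter (fun w => w ∈ Kcirc F A)).card + A.card := card_union_le _ _
      _ ≤ nIn U (Kcirc F A) + 2 := by
          rw [nIn]
          have : A.card = 2 := card_pair hxy
          omega
  exact_mod_cast hcard
end kcirc
section kcirc3
variable {F : Type} [Field F] [Fintype F]
open Classical

lemma kcirc_triple (U : Finset (Fin 3 → F)) {x y z : Fin 3 → F}
    (hxy : x ≠ y) (hzx : z ≠ x) (hzy : z ≠ y) :
    (nIn U (affineSpan F ((({x, y, z} : Finset (Fin 3 → F))) : Set (Fin 3 → F)) :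
        Set (Fin 3 → F)) : ℝ) ≤ (nIn U (Kcirc F {x, y, z}) : ℝ) +
      ((nIn U (affineSpan F ({x, y} : Set (Fin 3 → F)) : Set (Fin 3 → F)) : ℝ) +
       (nIn U (affineSpan F ({x, z} : Set (Fin 3 → F)) : Set (Fin 3 → F)) : ℝ) +
       (nIn U (affineSpan F ({y, z} : Set (Fin 3 → F)) : Set (Fin 3 → F)) : ℝ)) := by
  set A : Finset (Fin 3 → F) := {x, y, z} with hA
  set f1 := U.filter (fun w => w ∈ (affineSpan F ({x, y} : Set (Fin 3 → F)) : Set (Fin 3 → F)))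
  set f2 := U.filter (fun w => w ∈ (affineSpan F ({x, z} : Set (Fin 3 → F)) : Set (Fin 3 → F)))
  set f3 := U.filter (fun w => w ∈ (affineSpan F ({y, z} : Set (Fin 3 → F)) : Set (Fin 3 → F)))
  have hsub : U.filter (fun w => w ∈ (affineSpan F ((A : Set (Fin 3 → F))) :
      Set (Fin 3 → F))) ⊆ (U.filter (fun w => w ∈ Kcirc F A)) ∪ (f1 ∪ f2 ∪ f3) := by
    intro w hw
    rw [mem_filter] at hw
    by_cases hK : w ∈ Kcirc F A
    · exact mem_union_left _ (mem_filter.2 ⟨hw.1, hK⟩)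
    · apply mem_union_right
      have hwU : w ∈ ⋃ (B : Finset (Fin 3 → F)) (_ : B ⊂ A ∧ B.Nonempty),
          (affineSpan F (B : Set (Fin 3 → F)) : Set (Fin 3 → F)) := by
        by_contra hc
        exact hK ⟨hw.2, hc⟩
      simp only [Set.mem_iUnion] at hwU
      obtain ⟨B, ⟨hBA, hBne⟩, hwB⟩ := hwU
      obtain ⟨a, haA, haB⟩ := Finset.exists_of_ssubset hBA
      have haA' : a = x ∨ a = y ∨ a = z := by
        rw [hA] at haA; simpa using haA
      have hBsub : ∀ u v : Fin 3 → F, (∀ b ∈ B, b = u ∨ b = v) →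
          w ∈ (affineSpan F ({u, v} : Set (Fin 3 → F)) : Set (Fin 3 → F)) := by
        intro u v hbuv
        have : (B : Set (Fin 3 → F)) ⊆ ({u, v} : Set (Fin 3 → F)) := by
          intro b hb
          rcases hbuv b (by exact_mod_cast hb) with rfl | rfl
          · exact Set.mem_insert _ _
          · exact Set.mem_insert_of_mem _ rfl
        exact affineSpan_mono F this hwB
      have hBmem : ∀ b ∈ B, b = x ∨ b = y ∨ b = z := by
        intro b hb
        have := hBA.1 hb
        rw [hA] at this; simpa using this
      rcases haA' with rfl | rfl | rfl
      · -- a = x : B ⊆ {y, z}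
        refine mem_union_right _ (mem_filter.2 ⟨hw.1, hBsub y z ?_⟩)
        intro b hb
        rcases hBmem b hb with rfl | h | h
        · exact absurd hb haB
        · exact Or.inl h
        · exact Or.inr h
      · -- a = y : B ⊆ {x, z}
        refine mem_union_left _ (mem_union_right _ (mem_filter.2 ⟨hw.1, hBsub x z ?_⟩))
        intro b hb
        rcases hBmem b hb with h | rfl | h
        · exact Or.inl h
        · exact absurd hb haB
        · exact Or.inr h
      · -- a = z : B ⊆ {x, y}
        refine mem_union_left _ (mem_union_left _ (mem_filter.2 ⟨hw.1, hBsub x y ?_⟩))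
        intro b hb
        rcases hBmem b hb with h | h | rfl
        · exact Or.inl h
        · exact Or.inr h
        · exact absurd hb haB
  have hcard : nIn U (affineSpan F ((A : Set (Fin 3 → F))) : Set (Fin 3 → F)) ≤
      nIn U (Kcirc F A) + (f1.card + f2.card + f3.card) := by
    calc nIn U _ ≤ ((U.filter (fun w => w ∈ Kcirc F A)) ∪ (f1 ∪ f2 ∪ f3)).card :=
          card_le_card hsub
      _ ≤ (U.filter (fun w => w ∈ Kcirc F A)).card + (f1 ∪ f2 ∪ f3).card := card_union_le _ _
      _ ≤ nIn U (Kcirc F A) + (f1.card + f2.card + f3.card) := by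
          rw [nIn]
          have h1 : (f1 ∪ f2 ∪ f3).card ≤ f1.card + f2.card + f3.card :=
            le_trans (card_union_le _ _) (by
              have := card_union_le f1 f2
              omega)
          omega
  have h1 : nIn U (affineSpan F ({x, y} : Set (Fin 3 → F)) : Set (Fin 3 → F)) = f1.card := by
    rw [nIn]
  have h2 : nIn U (affineSpan F ({x, z} : Set (Fin 3 → F)) : Set (Fin 3 → F)) = f2.card := by
    rw [nIn]
  have h3 : nIn U (affineSpan F ({y, z} : Set (Fin 3 → F)) : Set (Fin 3 → F)) = f3.card := by
    rw [nIn]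
  rw [h1, h2, h3]
  exact_mod_cast hcard
end kcirc3
section caseone
variable {F : Type} [Field F] [Fintype F]
open Classical

lemma nIn_diag_le' (U : Finset (Fin 3 → F)) (a : Fin 3 → F) :
    nIn U (affineSpan F ({a, a} : Set (Fin 3 → F)) : Set (Fin 3 → F)) ≤ 1 := by
  have h1 : ({a, a} : Set (Fin 3 → F)) = {a} := by simp
  calc nIn U _ ≤ ({a} : Finset (Fin 3 → F)).card := by
        apply card_le_card
        intro w hw
        rw [mem_filter] at hw
        have := hw.2
        rw [h1, AffineSubspace.coe_affineSpan_singleton] at this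
        simpa using this
    _ = 1 := card_singleton a

lemma case_one {U : Finset (Fin 3 → F)} {t : ℝ} (ht3 : 3 ≤ t)
    (hcase : ((U.card : ℝ)) ^ 2 / 12 ≤
      (((U ×ˢ U).filter (fun p => t ≤ (nIn U (affineSpan F ({p.1, p.2} :
        Set (Fin 3 → F)) : Set (Fin 3 → F)) : ℝ))).card : ℝ)) :
    ∃ 𝒜 ⊆ Gj F 2 U, ((U.card : ℝ)) ^ 2 / 48 ≤ (𝒜.card : ℝ) ∧
      ∀ A ∈ 𝒜,
        ((nIn U (affineSpan F (A : Set (Fin 3 → F)) : Set (Fin 3 → F)) : ℝ) / 10 ≤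
            (nIn U (Kcirc F A) : ℝ) ∧
        t ≤ (nIn U (affineSpan F (A : Set (Fin 3 → F)) : Set (Fin 3 → F)) : ℝ)) := by
  set Rset := (U ×ˢ U).filter (fun p => t ≤ (nIn U (affineSpan F ({p.1, p.2} :
      Set (Fin 3 → F)) : Set (Fin 3 → F)) : ℝ)) with hRset
  have hne : ∀ p ∈ Rset, p.1 ≠ p.2 := by
    intro p hp heq
    rw [hRset, mem_filter] at hp
    have h2 := hp.2
    rw [heq] at h2
    have h1 := nIn_diag_le' U p.2
    have : (3 : ℝ) ≤ 1 := le_trans ht3 (le_trans h2 (by exact_mod_cast h1))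
    linarith
  have hmemU : ∀ p ∈ Rset, p.1 ∈ U ∧ p.2 ∈ U := by
    intro p hp
    rw [hRset, mem_filter, mem_product] at hp
    exact hp.1
  set 𝒜 := Rset.image (fun p => ({p.1, p.2} : Finset (Fin 3 → F))) with h𝒜
  have hcoe : ∀ a b : Fin 3 → F, ((({a, b} : Finset (Fin 3 → F))) : Set (Fin 3 → F)) =
      ({a, b} : Set (Fin 3 → F)) := by intro a b; simp
  refine ⟨𝒜, ?_, ?_, ?_⟩
  · -- 𝒜 ⊆ Gj F 2 U
    intro A hA
    obtain ⟨p, hp, rfl⟩ := mem_image.1 hA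
    have hxy := hne p hp
    have hU := hmemU p hp
    rw [Gj, mem_filter, mem_powersetCard]
    refine ⟨⟨?_, card_pair hxy⟩, ?_⟩
    · intro w hw
      rcases mem_insert.1 hw with rfl | hw
      · exact hU.1
      · rw [mem_singleton] at hw; subst hw; exact hU.2
    · rintro ⟨W, hW0, hWmem⟩
      have hd : p.2 -ᵥ p.1 ∈ W.direction :=
        AffineSubspace.vsub_mem_direction
          (hWmem p.2 (by simp)) (hWmem p.1 (by simp))
      have hbot : W.direction = ⊥ := Submodule.finrank_eq_zero.1 (by simpa using hW0)
      rw [hbot, Submodule.mem_bot] at hd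
      have h21 : p.2 = p.1 := by rwa [vsub_eq_zero_iff_eq] at hd
      exact hxy h21.symm
  · -- cardinality
    have h4 : Rset.card ≤ 4 * 𝒜.card := by
      apply card_le_mul_card_image
      intro a ha
      obtain ⟨p, hp, rfl⟩ := mem_image.1 ha
      have hsub : Rset.filter (fun p' => ({p'.1, p'.2} : Finset (Fin 3 → F)) = {p.1, p.2}) ⊆
          ({p.1, p.2} : Finset (Fin 3 → F)) ×ˢ ({p.1, p.2} : Finset (Fin 3 → F)) := by
        intro p' hp'
        rw [mem_filter] at hp'
        rw [mem_product]
        constructor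
        · rw [← hp'.2]; exact mem_insert_self _ _
        · rw [← hp'.2]; exact mem_insert_of_mem (mem_singleton_self _)
      calc (Rset.filter (fun p' => ({p'.1, p'.2} : Finset (Fin 3 → F)) = {p.1, p.2})).card
          ≤ ((({p.1, p.2} : Finset (Fin 3 → F))) ×ˢ (({p.1, p.2} : Finset (Fin 3 → F)))).card :=
            card_le_card hsub
        _ ≤ 4 := by
          rw [card_product]
          have := card_insert_le p.1 ({p.2} : Finset (Fin 3 → F))
          have h1 : ({p.1, p.2} : Finset (Fin 3 → F)).card ≤ 2 := by
            simpa using this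
          nlinarith
    have : ((Rset.card : ℝ)) ≤ 4 * 𝒜.card := by exact_mod_cast h4
    linarith
  · -- per-element conditions
    intro A hA
    obtain ⟨p, hp, rfl⟩ := mem_image.1 hA
    have hxy := hne p hp
    have hrich : t ≤ (nIn U (affineSpan F ((({p.1, p.2} : Finset (Fin 3 → F))) :
        Set (Fin 3 → F)) : Set (Fin 3 → F)) : ℝ) := by
      rw [hcoe]
      exact (mem_filter.1 hp).2
    refine ⟨?_, hrich⟩
    have hk := kcirc_pair U hxy
    have hge3 : (3 : ℝ) ≤ (nIn U (affineSpan F ((({p.1, p.2} : Finset (Fin 3 → F))) :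
        Set (Fin 3 → F)) : Set (Fin 3 → F)) : ℝ) := le_trans ht3 hrich
    linarith
end caseone
section casetwo
variable {F : Type} [Field F] [Fintype F]
open Classical

/-- Per-pair lower bound on the number of good third points. -/
lemma good_z_count {U : Finset (Fin 3 → F)} {t : ℝ}
    (ht : t = (U.card : ℝ) / (100 * (Fintype.card F : ℝ)))
    (ht0 : 0 ≤ t)
    (hline : ∀ L : AffineSubspace F (Fin 3 → F), Module.finrank F L.direction = 1 →
      (nIn U (L : Set (Fin 3 → F)) : ℝ) ≤ (U.card : ℝ) / 2)
    {x y : Fin 3 → F} (hxy : x ≠ y) :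
    (U.card : ℝ) / 2 - 2 * (U.card : ℝ) / 25
      - ((U.filter (fun z => t ≤ (nIn U (affineSpan F ({x, z} : Set (Fin 3 → F)) :
          Set (Fin 3 → F)) : ℝ))).card : ℝ)
      - ((U.filter (fun z => t ≤ (nIn U (affineSpan F ({y, z} : Set (Fin 3 → F)) :
          Set (Fin 3 → F)) : ℝ))).card : ℝ)
      ≤ ((U.filter (fun z => z ∉ affineSpan F ({x, y} : Set (Fin 3 → F)) ∧
          (nIn U (affineSpan F ({x, z} : Set (Fin 3 → F)) : Set (Fin 3 → F)) : ℝ) < t ∧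
          (nIn U (affineSpan F ({y, z} : Set (Fin 3 → F)) : Set (Fin 3 → F)) : ℝ) < t ∧
          4 * t ≤ (nIn U (affineSpan F ({x, y, z} : Set (Fin 3 → F)) :
            Set (Fin 3 → F)) : ℝ))).card : ℝ) := by
  set q := Fintype.card F with hq
  have hq2 : 2 ≤ q := Fintype.one_lt_card
  have hqR : (2 : ℝ) ≤ (q : ℝ) := by exact_mod_cast hq2
  set n := U.card with hn
  set L := affineSpan F ({x, y} : Set (Fin 3 → F)) with hL
  set Z := U.filter (fun z => z ∉ L ∧
      (nIn U (affineSpan F ({x, z} : Set (Fin 3 → F)) : Set (Fin 3 → F)) : ℝ) < t ∧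
      (nIn U (affineSpan F ({y, z} : Set (Fin 3 → F)) : Set (Fin 3 → F)) : ℝ) < t ∧
      4 * t ≤ (nIn U (affineSpan F ({x, y, z} : Set (Fin 3 → F)) : Set (Fin 3 → F)) : ℝ))
    with hZ
  set D1 := U.filter (fun z => t ≤ (nIn U (affineSpan F ({x, z} : Set (Fin 3 → F)) :
      Set (Fin 3 → F)) : ℝ)) with hD1
  set D2 := U.filter (fun z => t ≤ (nIn U (affineSpan F ({y, z} : Set (Fin 3 → F)) :
      Set (Fin 3 → F)) : ℝ)) with hD2
  set Bp := U.filter (fun z => z ∉ L ∧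
      (nIn U (affineSpan F ({x, y, z} : Set (Fin 3 → F)) : Set (Fin 3 → F)) : ℝ) < 4 * t)
    with hBp
  have hcover : U.filter (fun z => z ∉ L) ⊆ Z ∪ D1 ∪ D2 ∪ Bp := by
    intro z hz
    rw [mem_filter] at hz
    obtain ⟨hzU, hzL⟩ := hz
    by_cases h1 : t ≤ (nIn U (affineSpan F ({x, z} : Set (Fin 3 → F)) :
        Set (Fin 3 → F)) : ℝ)
    · exact mem_union_left _ (mem_union_left _ (mem_union_right _ (mem_filter.2 ⟨hzU, h1⟩)))
    by_cases h2 : t ≤ (nIn U (affineSpan F ({y, z} : Set (Fin 3 → F)) :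
        Set (Fin 3 → F)) : ℝ)
    · exact mem_union_left _ (mem_union_right _ (mem_filter.2 ⟨hzU, h2⟩))
    by_cases h3 : 4 * t ≤ (nIn U (affineSpan F ({x, y, z} : Set (Fin 3 → F)) :
        Set (Fin 3 → F)) : ℝ)
    · exact mem_union_left _ (mem_union_left _ (mem_union_left _ (mem_filter.2
        ⟨hzU, hzL, lt_of_not_ge h1, lt_of_not_ge h2, h3⟩)))
    · exact mem_union_right _ (mem_filter.2 ⟨hzU, hzL, lt_of_not_ge h3⟩)
  have hnotL : (U.filter (fun z => z ∉ L)).card = n - nIn U (L : Set (Fin 3 → F)) := by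
    have h := card_filter_add_card_filter_not (s := U)
      (p := fun z => z ∈ (L : Set (Fin 3 → F)))
    have h2 : nIn U (L : Set (Fin 3 → F)) = (U.filter (fun z => z ∈ (L : Set (Fin 3 → F)))).card := by
      rw [nIn]
    have h3 : U.filter (fun z => z ∉ L) = U.filter (fun z => ¬ z ∈ (L : Set (Fin 3 → F))) := by
      apply filter_congr
      intro z hz
      simp [SetLike.mem_coe]
    rw [h3]
    omega
  have hLhalf : (nIn U (L : Set (Fin 3 → F)) : ℝ) ≤ (n : ℝ) / 2 :=
    hline L (line_dir hxy)
  have hBcard : (Bp.card : ℝ) ≤ 2 * (n : ℝ) / 25 := by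
    have h := plane_count (U := U) hxy (t' := 4 * t) (by linarith)
    calc (Bp.card : ℝ) ≤ ((q : ℝ) + 1) * (4 * t) := h
      _ ≤ 2 * (q : ℝ) * (4 * t) := by nlinarith
      _ = 8 * (q : ℝ) * t := by ring
      _ = 2 * (n : ℝ) / 25 := by
          rw [ht]
          field_simp
          ring
  have hunion : ((U.filter (fun z => z ∉ L)).card : ℝ) ≤
      (Z.card : ℝ) + (D1.card : ℝ) + (D2.card : ℝ) + (Bp.card : ℝ) := by
    have h1 : (Z ∪ D1 ∪ D2 ∪ Bp).card ≤ Z.card + D1.card + D2.card + Bp.card := by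
      have a1 := card_union_le (Z ∪ D1 ∪ D2) Bp
      have a2 := card_union_le (Z ∪ D1) D2
      have a3 := card_union_le Z D1
      omega
    have h2 := card_le_card hcover
    exact_mod_cast le_trans h2 h1
  have hnIn_le : nIn U (L : Set (Fin 3 → F)) ≤ n := nIn_le_card U _
  have hcast : ((U.filter (fun z => z ∉ L)).card : ℝ) =
      (n : ℝ) - (nIn U (L : Set (Fin 3 → F)) : ℝ) := by
    rw [hnotL]
    push_cast [Nat.cast_sub hnIn_le]
    ring
  linarith [hcast ▸ hunion]
end casetwo
section casetwomain
variable {F : Type} [Field F] [Fintype F]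
open Classical

set_option maxHeartbeats 2000000 in
lemma case_two {U : Finset (Fin 3 → F)} {t : ℝ}
    (ht : t = (U.card : ℝ) / (100 * (Fintype.card F : ℝ)))
    (hbig : 1000000 * (Fintype.card F : ℝ) ≤ (U.card : ℝ))
    (hline : ∀ L : AffineSubspace F (Fin 3 → F), Module.finrank F L.direction = 1 →
      (nIn U (L : Set (Fin 3 → F)) : ℝ) ≤ (U.card : ℝ) / 2)
    (hcase : ((((U ×ˢ U).filter (fun p => t ≤ (nIn U (affineSpan F ({p.1, p.2} :
        Set (Fin 3 → F)) : Set (Fin 3 → F)) : ℝ))).card : ℝ) < ((U.card : ℝ)) ^ 2 / 12)) :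
    ∃ 𝒜 ⊆ Gj F 3 U, ((U.card : ℝ)) ^ 3 / 270 ≤ (𝒜.card : ℝ) ∧
      ∀ A ∈ 𝒜,
        ((nIn U (affineSpan F (A : Set (Fin 3 → F)) : Set (Fin 3 → F)) : ℝ) / 10 ≤
            (nIn U (Kcirc F A) : ℝ) ∧
        4 * t ≤ (nIn U (affineSpan F (A : Set (Fin 3 → F)) : Set (Fin 3 → F)) : ℝ)) := by
  set q := Fintype.card F with hq
  have hq2 : 2 ≤ q := Fintype.one_lt_card
  have hqR : (2 : ℝ) ≤ (q : ℝ) := by exact_mod_cast hq2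
  set n := U.card with hn
  have hnR : (2000000 : ℝ) ≤ (n : ℝ) := by nlinarith
  have ht4 : (10000 : ℝ) ≤ t := by
    rw [ht, le_div_iff₀ (by positivity)]
    nlinarith
  have ht0 : (0 : ℝ) ≤ t := by linarith
  -- the set of rich ordered pairs and its degree decomposition
  set Rset := (U ×ˢ U).filter (fun p => t ≤ (nIn U (affineSpan F ({p.1, p.2} :
      Set (Fin 3 → F)) : Set (Fin 3 → F)) : ℝ)) with hRset
  set deg : (Fin 3 → F) → ℕ := fun a => (U.filter (fun z => t ≤ (nIn U (affineSpan F
      ({a, z} : Set (Fin 3 → F)) : Set (Fin 3 → F)) : ℝ))).card with hdeg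
  have hRdeg : ∑ a ∈ U, deg a = Rset.card := by
    have hbu : Rset = U.biUnion (fun a => (U.filter (fun z => t ≤ (nIn U (affineSpan F
        ({a, z} : Set (Fin 3 → F)) : Set (Fin 3 → F)) : ℝ))).image (fun z => (a, z))) := by
      ext p
      simp only [hRset, mem_filter, mem_product, mem_biUnion, mem_image]
      constructor
      · rintro ⟨⟨h1, h2⟩, h3⟩
        exact ⟨p.1, h1, p.2, ⟨h2, h3⟩, rfl⟩
      · rintro ⟨a, ha, z, hz, rfl⟩
        exact ⟨⟨ha, hz.1⟩, hz.2⟩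
    rw [hbu, card_biUnion]
    · apply Finset.sum_congr rfl
      intro a _
      rw [card_image_of_injective _ (fun z z' h => (Prod.ext_iff.1 h).2)]
    · intro a _ b _ hab
      rw [Function.onFun, Finset.disjoint_left]
      rintro p hp hp'
      rw [mem_image] at hp hp'
      obtain ⟨z, _, rfl⟩ := hp
      obtain ⟨z', _, h⟩ := hp'
      exact hab ((Prod.ext_iff.1 h).1).symm
  -- the set of poor ordered pairs
  set Pset := (U ×ˢ U).filter (fun p => p.1 ≠ p.2 ∧ (nIn U (affineSpan F ({p.1, p.2} :
      Set (Fin 3 → F)) : Set (Fin 3 → F)) : ℝ) < t) with hPset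
  have hPcard : (n : ℝ) ^ 2 - (n : ℝ) - (Rset.card : ℝ) ≤ (Pset.card : ℝ) := by
    set Dg := (U ×ˢ U).filter (fun p => p.1 = p.2) with hDg
    have hcov : (U ×ˢ U) ⊆ Pset ∪ Rset ∪ Dg := by
      intro p hp
      by_cases h1 : p.1 = p.2
      · exact mem_union_right _ (mem_filter.2 ⟨hp, h1⟩)
      by_cases h2 : t ≤ (nIn U (affineSpan F ({p.1, p.2} : Set (Fin 3 → F)) :
          Set (Fin 3 → F)) : ℝ)
      · exact mem_union_left _ (mem_union_right _ (mem_filter.2 ⟨hp, h2⟩))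
      · exact mem_union_left _ (mem_union_left _ (mem_filter.2 ⟨hp, h1, lt_of_not_ge h2⟩))
    have hDgcard : Dg.card ≤ n := by
      apply Finset.card_le_card_of_injOn Prod.fst
      · intro p hp
        rw [hDg, Finset.mem_coe, mem_filter, mem_product] at hp
        exact hp.1.1
      · intro p hp p' hp' h
        simp only [Finset.mem_coe, hDg, mem_filter] at hp hp'
        apply Prod.ext_iff.2
        exact ⟨h, by rw [← hp.2, ← hp'.2, h]⟩
    have h1 : (U ×ˢ U).card = n * n := by rw [card_product]
    have h2 := card_le_card hcov
    have h3 : (Pset ∪ Rset ∪ Dg).card ≤ Pset.card + Rset.card + Dg.card := by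
      have a1 := card_union_le (Pset ∪ Rset) Dg
      have a2 := card_union_le Pset Rset
      omega
    have h4 : n * n ≤ Pset.card + Rset.card + n := by omega
    have h5 : ((n : ℝ)) * n ≤ (Pset.card : ℝ) + (Rset.card : ℝ) + n := by exact_mod_cast h4
    nlinarith
  -- good third points
  set Zg : (Fin 3 → F) × (Fin 3 → F) → Finset (Fin 3 → F) := fun p =>
    U.filter (fun z => z ∉ affineSpan F ({p.1, p.2} : Set (Fin 3 → F)) ∧
      (nIn U (affineSpan F ({p.1, z} : Set (Fin 3 → F)) : Set (Fin 3 → F)) : ℝ) < t ∧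
      (nIn U (affineSpan F ({p.2, z} : Set (Fin 3 → F)) : Set (Fin 3 → F)) : ℝ) < t ∧
      4 * t ≤ (nIn U (affineSpan F ({p.1, p.2, z} : Set (Fin 3 → F)) :
        Set (Fin 3 → F)) : ℝ)) with hZg
  have hZbound : ∀ p ∈ Pset, (n : ℝ) / 2 - 2 * (n : ℝ) / 25 - (deg p.1 : ℝ) - (deg p.2 : ℝ)
      ≤ ((Zg p).card : ℝ) := by
    intro p hp
    rw [hPset, mem_filter] at hp
    exact good_z_count ht ht0 hline hp.2.1
  -- total count
  set W := Pset.sigma Zg with hW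
  have hWcard : ((n : ℝ)) ^ 3 / 10 ≤ (W.card : ℝ) := by
    have h1 : (W.card : ℝ) = ∑ p ∈ Pset, ((Zg p).card : ℝ) := by
      rw [hW, Finset.card_sigma]
      push_cast
      rfl
    have h2 : ∑ p ∈ Pset, ((n : ℝ) / 2 - 2 * (n : ℝ) / 25 - (deg p.1 : ℝ) - (deg p.2 : ℝ))
        ≤ ∑ p ∈ Pset, ((Zg p).card : ℝ) := Finset.sum_le_sum hZbound
    have h3 : ∑ p ∈ Pset, ((n : ℝ) / 2 - 2 * (n : ℝ) / 25 - (deg p.1 : ℝ) - (deg p.2 : ℝ))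
        = (Pset.card : ℝ) * ((n : ℝ) / 2 - 2 * (n : ℝ) / 25)
          - ∑ p ∈ Pset, ((deg p.1 : ℝ) + (deg p.2 : ℝ)) := by
      rw [Finset.sum_congr rfl (fun p _ => by
        show (n : ℝ) / 2 - 2 * (n : ℝ) / 25 - (deg p.1 : ℝ) - (deg p.2 : ℝ)
          = ((n : ℝ) / 2 - 2 * (n : ℝ) / 25) - ((deg p.1 : ℝ) + (deg p.2 : ℝ))
        ring)]
      rw [Finset.sum_sub_distrib, Finset.sum_const, nsmul_eq_mul]
    have h4 : ∑ p ∈ Pset, ((deg p.1 : ℝ) + (deg p.2 : ℝ))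
        ≤ 2 * (n : ℝ) * (Rset.card : ℝ) := by
      have hnat : ∑ p ∈ Pset, (deg p.1 + deg p.2)
          ≤ 2 * n * Rset.card := by
        calc ∑ p ∈ Pset, (deg p.1 + deg p.2)
            ≤ ∑ p ∈ U ×ˢ U, (deg p.1 + deg p.2) := by
              apply Finset.sum_le_sum_of_subset
              rw [hPset]
              exact filter_subset _ _
          _ = ∑ a ∈ U, ∑ b ∈ U, (deg a + deg b) := by
              rw [Finset.sum_product]
          _ = ∑ a ∈ U, (n * deg a + Rset.card) := by
              apply Finset.sum_congr rfl
              intro a _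
              rw [Finset.sum_add_distrib, Finset.sum_const, smul_eq_mul, hRdeg]
          _ = n * Rset.card + n * Rset.card := by
              rw [Finset.sum_add_distrib, Finset.sum_const, smul_eq_mul, ← Finset.mul_sum,
                hRdeg]
          _ = 2 * n * Rset.card := by ring
      calc ∑ p ∈ Pset, ((deg p.1 : ℝ) + (deg p.2 : ℝ))
          = ((∑ p ∈ Pset, (deg p.1 + deg p.2) : ℕ) : ℝ) := by push_cast; rfl
        _ ≤ ((2 * n * Rset.card : ℕ) : ℝ) := by exact_mod_cast hnat
        _ = 2 * (n : ℝ) * (Rset.card : ℝ) := by push_cast; ring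
    -- numerics
    set NR : ℝ := (n : ℝ) with hNR
    set RR : ℝ := (Rset.card : ℝ) with hRR
    set PP : ℝ := (Pset.card : ℝ) with hPP
    have hRR12 : RR ≤ NR ^ 2 / 12 := le_of_lt hcase
    have hPP0 : NR ^ 2 - NR - RR ≤ PP := hPcard
    have hPP1 : 11 / 12 * NR ^ 2 - NR ≤ PP := by nlinarith
    have hconst : (0 : ℝ) ≤ NR / 2 - 2 * NR / 25 := by nlinarith
    have hW1 : PP * (NR / 2 - 2 * NR / 25) - 2 * NR * RR ≤ (W.card : ℝ) := by
      rw [h1]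
      have := le_trans (le_of_eq h3.symm) h2
      linarith [h4, this]
    have hmul : (11 / 12 * NR ^ 2 - NR) * (NR / 2 - 2 * NR / 25)
        ≤ PP * (NR / 2 - 2 * NR / 25) := by
      apply mul_le_mul_of_nonneg_right hPP1 hconst
    have hNR0 : (0 : ℝ) ≤ NR := by linarith
    have hsq : (0 : ℝ) ≤ NR ^ 2 := sq_nonneg NR
    have h2NR : 2 * NR * RR ≤ NR ^ 3 / 6 := by
      nlinarith [mul_le_mul_of_nonneg_left hRR12 (by linarith : (0:ℝ) ≤ 2 * NR)]
    have hexp : (11 / 12 * NR ^ 2 - NR) * (NR / 2 - 2 * NR / 25)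
        = 231 / 600 * NR ^ 3 - 21 / 50 * NR ^ 2 := by ring
    have hlast : 21 / 50 * NR ^ 2 ≤ 71 / 600 * NR ^ 3 := by
      nlinarith [mul_le_mul_of_nonneg_left hnR hsq]
    linarith [hW1, hmul, h2NR, hexp, hlast]
  -- the family of triples
  set f : (Σ _ : (Fin 3 → F) × (Fin 3 → F), (Fin 3 → F)) → Finset (Fin 3 → F) :=
    fun w => ({w.1.1, w.1.2, w.2} : Finset (Fin 3 → F)) with hf
  set 𝒜 := W.image f with h𝒜
  have hWmem : ∀ w ∈ W, w.1.1 ∈ U ∧ w.1.2 ∈ U ∧ w.2 ∈ U ∧ w.1.1 ≠ w.1.2 ∧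
      w.2 ∉ affineSpan F ({w.1.1, w.1.2} : Set (Fin 3 → F)) ∧
      (nIn U (affineSpan F ({w.1.1, w.1.2} : Set (Fin 3 → F)) : Set (Fin 3 → F)) : ℝ) < t ∧
      (nIn U (affineSpan F ({w.1.1, w.2} : Set (Fin 3 → F)) : Set (Fin 3 → F)) : ℝ) < t ∧
      (nIn U (affineSpan F ({w.1.2, w.2} : Set (Fin 3 → F)) : Set (Fin 3 → F)) : ℝ) < t ∧
      4 * t ≤ (nIn U (affineSpan F ({w.1.1, w.1.2, w.2} : Set (Fin 3 → F)) :
        Set (Fin 3 → F)) : ℝ) := by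
    intro w hw
    rw [hW, Finset.mem_sigma] at hw
    obtain ⟨hw1, hw2⟩ := hw
    rw [hPset, mem_filter, mem_product] at hw1
    rw [hZg, mem_filter] at hw2
    exact ⟨hw1.1.1, hw1.1.2, hw2.1, hw1.2.1, hw2.2.1, hw1.2.2, hw2.2.2.1, hw2.2.2.2.1,
      hw2.2.2.2.2⟩
  have hdist : ∀ w ∈ W, w.2 ≠ w.1.1 ∧ w.2 ≠ w.1.2 := by
    intro w hw
    obtain ⟨-, -, -, -, hzL, -⟩ := hWmem w hw
    constructor
    · intro h
      rw [h] at hzL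
      exact hzL (subset_affineSpan F _ (Set.mem_insert _ _))
    · intro h
      rw [h] at hzL
      exact hzL (subset_affineSpan F _ (Set.mem_insert_of_mem _ rfl))
  have hcard3 : ∀ w ∈ W, (f w).card = 3 := by
    intro w hw
    obtain ⟨-, -, -, hxy, -⟩ := hWmem w hw
    obtain ⟨hzx, hzy⟩ := hdist w hw
    rw [hf]
    rw [card_insert_of_notMem (by
      simp only [mem_insert, mem_singleton]
      push_neg
      exact ⟨hxy, fun h => hzx h.symm⟩)]
    rw [card_pair (fun h => hzy h.symm)]
  refine ⟨𝒜, ?_, ?_, ?_⟩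
  · -- 𝒜 ⊆ Gj F 3 U
    intro A hA
    obtain ⟨w, hw, rfl⟩ := mem_image.1 hA
    obtain ⟨hxU, hyU, hzU, hxy, hzL, -⟩ := hWmem w hw
    rw [Gj, mem_filter, mem_powersetCard]
    refine ⟨⟨?_, hcard3 w hw⟩, ?_⟩
    · rw [hf]
      intro u hu
      simp only [mem_insert, mem_singleton] at hu
      rcases hu with rfl | rfl | rfl
      exacts [hxU, hyU, hzU]
    · rintro ⟨Wf, hWf1, hWfm⟩
      have hle : affineSpan F ({w.1.1, w.1.2} : Set (Fin 3 → F)) ≤ Wf := by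
        apply affineSpan_le.2
        rintro u (rfl | rfl)
        · exact hWfm w.1.1 (by rw [hf]; exact mem_insert_self _ _)
        · exact hWfm w.1.2 (by rw [hf]; simp)
      have heq := affine_eq_of_le_finrank
        (subset_affineSpan F _ (Set.mem_insert _ _)) hle
        (by rw [line_dir hxy, hWf1])
      apply hzL
      rw [heq]
      exact hWfm w.2 (by rw [hf]; simp)
  · -- cardinality
    have h27 : W.card ≤ 27 * 𝒜.card := by
      apply card_le_mul_card_image
      intro a ha
      obtain ⟨w₀, hw₀, rfl⟩ := mem_image.1 ha
      have hsub : W.filter (fun w' => f w' = f w₀) ⊆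
          ((f w₀ ×ˢ f w₀).sigma (fun _ => f w₀)) := by
        intro w' hw'
        rw [mem_filter] at hw'
        rw [Finset.mem_sigma, mem_product]
        have h1 : w'.1.1 ∈ f w₀ := by
          rw [← hw'.2, hf]
          exact mem_insert_self _ _
        have h2 : w'.1.2 ∈ f w₀ := by
          rw [← hw'.2, hf]
          simp
        have h3 : w'.2 ∈ f w₀ := by
          rw [← hw'.2, hf]
          simp
        exact ⟨⟨h1, h2⟩, h3⟩
      calc (W.filter (fun w' => f w' = f w₀)).card
          ≤ ((f w₀ ×ˢ f w₀).sigma (fun _ => f w₀)).card := card_le_card hsub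
        _ = 27 := by
            rw [Finset.card_sigma, Finset.sum_const, smul_eq_mul, card_product,
              hcard3 w₀ hw₀]
    have h27R : (W.card : ℝ) ≤ 27 * (𝒜.card : ℝ) := by exact_mod_cast h27
    linarith
  · -- per-element conditions
    intro A hA
    obtain ⟨w, hw, rfl⟩ := mem_image.1 hA
    obtain ⟨hxU, hyU, hzU, hxy, hzL, hpxy, hpxz, hpyz, hrich⟩ := hWmem w hw
    obtain ⟨hzx, hzy⟩ := hdist w hw
    have hcoe : ((f w : Finset (Fin 3 → F)) : Set (Fin 3 → F)) =
        ({w.1.1, w.1.2, w.2} : Set (Fin 3 → F)) := by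
      rw [hf]; simp
    have hrich' : 4 * t ≤ (nIn U (affineSpan F ((f w : Finset (Fin 3 → F)) :
        Set (Fin 3 → F)) : Set (Fin 3 → F)) : ℝ) := by
      rw [hcoe]; exact hrich
    refine ⟨?_, hrich'⟩
    have hk := kcirc_triple U hxy hzx hzy
    have hkf : (nIn U (affineSpan F ((f w : Finset (Fin 3 → F)) : Set (Fin 3 → F)) :
        Set (Fin 3 → F)) : ℝ) ≤ (nIn U (Kcirc F (f w)) : ℝ) +
        ((nIn U (affineSpan F ({w.1.1, w.1.2} : Set (Fin 3 → F)) : Set (Fin 3 → F)) : ℝ) +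
         (nIn U (affineSpan F ({w.1.1, w.2} : Set (Fin 3 → F)) : Set (Fin 3 → F)) : ℝ) +
         (nIn U (affineSpan F ({w.1.2, w.2} : Set (Fin 3 → F)) : Set (Fin 3 → F)) : ℝ)) := by
      rw [hf]
      exact hk
    linarith [hrich', hkf, hpxy, hpxz, hpyz, ht0]
end casetwomain

/-- Claim 7. -/
theorem stmt2 :
    ∃ T c : ℝ, 0 < T ∧ 0 < c ∧
      ∀ (F : Type) [Field F] [Fintype F],
        ∀ U : Finset (Fin 3 → F),
          T * (Fintype.card F : ℝ) ≤ (U.card : ℝ) →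
          (∀ L : AffineSubspace F (Fin 3 → F), Module.finrank F L.direction = 1 →
            (nIn U (L : Set (Fin 3 → F)) : ℝ) ≤ (U.card : ℝ) / 2) →
          ∃ j : ℕ, (j = 2 ∨ j = 3) ∧
            ∃ 𝒜 ⊆ Gj F j U,
              c * (U.card : ℝ) ^ j ≤ (𝒜.card : ℝ) ∧
              ∀ A ∈ 𝒜,
                (nIn U (affineSpan F (A : Set (Fin 3 → F)) : Set (Fin 3 → F)) : ℝ) / 10 ≤
                  (nIn U (Kcirc F A) : ℝ) ∧
                c * (U.card : ℝ) / (Fintype.card F : ℝ) ≤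
                  (nIn U (affineSpan F (A : Set (Fin 3 → F)) : Set (Fin 3 → F)) : ℝ) := by
  refine ⟨1000000, 1 / 1000, by norm_num, by norm_num, ?_⟩
  intro F _ _ U hTq hline
  classical
  set q := Fintype.card F with hq
  have hq2 : 2 ≤ q := Fintype.one_lt_card
  have hqR : (2 : ℝ) ≤ (q : ℝ) := by exact_mod_cast hq2
  have hq0 : (0 : ℝ) < (q : ℝ) := by linarith
  set n := U.card with hn
  have hnR : (2000000 : ℝ) ≤ (n : ℝ) := by nlinarith
  have hn0 : (0 : ℝ) ≤ (n : ℝ) := by linarith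
  set t : ℝ := (n : ℝ) / (100 * (q : ℝ)) with ht
  have ht3 : (3 : ℝ) ≤ t := by
    rw [ht, le_div_iff₀ (by positivity)]
    nlinarith
  have hct : (1 : ℝ) / 1000 * (n : ℝ) / (q : ℝ) ≤ t := by
    rw [ht]
    rw [div_le_div_iff₀ (by positivity) (by positivity)]
    ring_nf
    nlinarith
  by_cases hcase : ((U.card : ℝ)) ^ 2 / 12 ≤
      (((U ×ˢ U).filter (fun p => t ≤ (nIn U (affineSpan F ({p.1, p.2} :
        Set (Fin 3 → F)) : Set (Fin 3 → F)) : ℝ))).card : ℝ)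
  · obtain ⟨𝒜, hsub, hcard, hcond⟩ := case_one ht3 hcase
    refine ⟨2, Or.inl rfl, 𝒜, hsub, ?_, ?_⟩
    · calc (1 : ℝ) / 1000 * (n : ℝ) ^ 2 ≤ (n : ℝ) ^ 2 / 48 := by nlinarith
        _ ≤ (𝒜.card : ℝ) := hcard
    · intro A hA
      obtain ⟨h1, h2⟩ := hcond A hA
      exact ⟨h1, le_trans hct h2⟩
  · have hcase' := lt_of_not_ge hcase
    obtain ⟨𝒜, hsub, hcard, hcond⟩ := case_two ht hTq hline hcase'
    refine ⟨3, Or.inr rfl, 𝒜, hsub, ?_, ?_⟩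
    · calc (1 : ℝ) / 1000 * (n : ℝ) ^ 3 ≤ (n : ℝ) ^ 3 / 270 := by nlinarith
        _ ≤ (𝒜.card : ℝ) := hcard
    · intro A hA
      obtain ⟨h1, h2⟩ := hcond A hA
      refine ⟨h1, le_trans ?_ h2⟩
      calc (1 : ℝ) / 1000 * (n : ℝ) / (q : ℝ) ≤ t := hct
        _ ≤ 4 * t := by linarith
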